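/- Let α be a positive integer, β and γ integers, and ρ ∈ (0,1). Then ∑_{k=0}^{α−1} (((γ − kβ)/α)) · (1 − 2{(k+ρ)/α}) = 2·s(β, α; (γ + βρ)/α, −ρ). -/
import Mathlib


/-- The sawtooth function `((x))`: equal to `{x} - 1/2` for `x ∉ ℤ` and to `0` for `x ∈ ℤ`. -/
noncomputable def sawtooth (x : ℝ) : ℝ :=
  if Int.fract x = 0 then 0 else Int.fract x - 1 / 2

/-- The Dedekind–Rademacher sum `s(β, α; x, y) = ∑_{r=1}^α ((x + β(r+y)/α)) (((r+y)/α))`. -/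
noncomputable def drSum (b : ℤ) (a : ℕ) (x y : ℝ) : ℝ :=
  ∑ r ∈ Finset.Icc 1 a,
    sawtooth (x + (b : ℝ) * (((r : ℝ) + y) / (a : ℝ))) * sawtooth (((r : ℝ) + y) / (a : ℝ))

lemma sawtooth_add_int (x : ℝ) (n : ℤ) : sawtooth (x + n) = sawtooth x := by
  simp [sawtooth, Int.fract_add_intCast]

/-- For `ρ ∈ (0,1)`:
`∑_{k=0}^{α-1} (((γ - kβ)/α)) (1 - 2{(k+ρ)/α}) = 2 s(β, α; (γ+βρ)/α, -ρ)`. -/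
theorem sawtooth_sum_eq_two_drSum
    (α : ℕ) (hα : 0 < α) (β γ : ℤ) (ρ : ℝ) (hρ : ρ ∈ Set.Ioo (0 : ℝ) 1) :
    ∑ k ∈ Finset.range α,
        sawtooth (((γ : ℝ) - (k : ℝ) * (β : ℝ)) / (α : ℝ)) *
          (1 - 2 * Int.fract (((k : ℝ) + ρ) / (α : ℝ))) =
      2 * drSum β α (((γ : ℝ) + (β : ℝ) * ρ) / (α : ℝ)) (-ρ) := by
  obtain ⟨hρ0, hρ1⟩ := hρ
  have hα' : (0:ℝ) < (α:ℝ) := by exact_mod_cast hα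
  rw [drSum, Finset.mul_sum]
  refine Finset.sum_nbij' (fun k => α - k) (fun r => α - r) ?_ ?_ ?_ ?_ ?_
  · intro k hk
    simp only [Finset.mem_range] at hk
    simp only [Finset.mem_Icc]
    omega
  · intro r hr
    simp only [Finset.mem_Icc] at hr
    simp only [Finset.mem_range]
    omega
  · intro k hk
    simp only [Finset.mem_range] at hk
    show α - (α - k) = k
    omega
  · intro r hr
    simp only [Finset.mem_Icc] at hr
    show α - (α - r) = r
    omega
  · intro k hk
    simp only [Finset.mem_range] at hk
    have hcast : ((α - k : ℕ) : ℝ) = (α : ℝ) - k := by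
      rw [Nat.cast_sub hk.le]
    have hk' : (k : ℝ) < (α : ℝ) := by exact_mod_cast hk
    have hk0 : (0:ℝ) ≤ (k : ℝ) := Nat.cast_nonneg k
    -- argument equality for the first sawtooth
    have h3 : ((γ : ℝ) + (β : ℝ) * ρ) / (α : ℝ) + (β : ℝ) * ((((α - k : ℕ) : ℝ) + -ρ) / (α : ℝ))
        = ((γ : ℝ) - (k : ℝ) * (β : ℝ)) / (α : ℝ) + (β : ℝ) := by
      rw [hcast]; field_simp; ring
    -- second sawtooth value
    have hs : sawtooth ((((α - k : ℕ) : ℝ) + -ρ) / (α : ℝ))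
        = ((α : ℝ) - (k : ℝ) - ρ) / (α : ℝ) - 1 / 2 := by
      have hv : ((((α - k : ℕ) : ℝ) + -ρ) / (α : ℝ)) = ((α : ℝ) - (k : ℝ) - ρ) / (α : ℝ) := by
        rw [hcast]; ring
      have hpos : (0:ℝ) < ((α : ℝ) - (k : ℝ) - ρ) / (α : ℝ) := by
        apply div_pos _ hα'
        have : (k : ℝ) + 1 ≤ (α : ℝ) := by exact_mod_cast hk
        linarith
      have hlt : ((α : ℝ) - (k : ℝ) - ρ) / (α : ℝ) < 1 := by
        rw [div_lt_one hα']; linarith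
      have hf : Int.fract (((α : ℝ) - (k : ℝ) - ρ) / (α : ℝ)) = ((α : ℝ) - (k : ℝ) - ρ) / (α : ℝ) :=
        Int.fract_eq_self.2 ⟨hpos.le, hlt⟩
      rw [hv, sawtooth, hf, if_neg (by positivity)]
    -- fract value on the LHS
    have hf1 : Int.fract (((k : ℝ) + ρ) / (α : ℝ)) = ((k : ℝ) + ρ) / (α : ℝ) := by
      apply Int.fract_eq_self.2
      constructor
      · positivity
      · rw [div_lt_one hα']
        have : (k : ℝ) + 1 ≤ (α : ℝ) := by exact_mod_cast hk
        linarith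
    rw [h3, sawtooth_add_int, hs, hf1]
    field_simp
    ring
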